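/- Let k be a field, V and W k-vector spaces, k' a field extension of k, and α ∈ V ⊗_k W. If the image of α in (k' ⊗_k V) ⊗_{k'} (k' ⊗_k W) is a pure tensor μ' ⊗ ν' for some μ' ∈ k' ⊗_k V and ν' ∈ k' ⊗_k W, then α itself is a pure tensor: there exist μ ∈ V and ν ∈ W with α = μ ⊗ ν. -/

import Mathlib

open TensorProduct

universe u v w

theorem stmt15 (k : Type u) (k' : Type u) (V W : Type u) [Field k] [Field k'] [Algebra k k']
    [AddCommGroup V] [Module k V] [AddCommGroup W] [Module k W]
    (α : V ⊗[k] W)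
    (h : ∃ (μ' : k' ⊗[k] V) (ν' : k' ⊗[k] W),
      TensorProduct.AlgebraTensorModule.distribBaseChange k k' V W
        ((1 : k') ⊗ₜ[k] α) = μ' ⊗ₜ[k'] ν') :
    ∃ (μ : V) (ν : W), α = μ ⊗ₜ[k] ν := by
  classical
  obtain ⟨μ', ν', h⟩ := h
  set b := Module.Basis.ofVectorSpace k V with hb
  -- coordinates of α with respect to b on the V side
  let E : V ⊗[k] W ≃ₗ[k] (Module.Basis.ofVectorSpaceIndex k V →₀ W) :=
    (TensorProduct.congr b.repr (LinearEquiv.refl k W)).trans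
      (TensorProduct.finsuppScalarLeft k W _)
  set g := E α with hgdef
  have hα : α = ∑ i ∈ g.support, b i ⊗ₜ[k] g i := by
    conv_lhs => rw [← E.symm_apply_apply α, ← hgdef]
    conv_lhs => rw [← Finsupp.sum_single g, Finsupp.sum, map_sum]
    refine Finset.sum_congr rfl fun i _ => ?_
    simp [E]
  -- base change side
  have hd : TensorProduct.AlgebraTensorModule.distribBaseChange k k' V W ((1 : k') ⊗ₜ[k] α)
      = ∑ i ∈ g.support, ((1 : k') ⊗ₜ[k] b i) ⊗ₜ[k'] ((1 : k') ⊗ₜ[k] g i) := by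
    rw [hα, tmul_sum, map_sum]
    exact Finset.sum_congr rfl fun i _ => rfl
  set b' := b.baseChange k' with hb'
  -- the contraction maps
  let F : Module.Basis.ofVectorSpaceIndex k V →
      ((k' ⊗[k] V) ⊗[k'] (k' ⊗[k] W)) →ₗ[k'] (k' ⊗[k] W) := fun j =>
    (TensorProduct.lid k' (k' ⊗[k] W)).toLinearMap.comp
      (LinearMap.rTensor (k' ⊗[k] W) (b'.coord j))
  have hF : ∀ j x y, F j (x ⊗ₜ[k'] y) = (b'.coord j x) • y := by
    intro j x y
    simp [F]
  set c : Module.Basis.ofVectorSpaceIndex k V → k' := fun j => b'.coord j μ' with hc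
  have key : ∀ j, (1 : k') ⊗ₜ[k] g j = c j • ν' := by
    intro j
    have h2 := congrArg (F j) (hd ▸ h)
    rw [hF, map_sum] at h2
    have h3 : ∀ i ∈ g.support,
        F j (((1 : k') ⊗ₜ[k] b i) ⊗ₜ[k'] ((1 : k') ⊗ₜ[k] g i))
          = if i = j then (1 : k') ⊗ₜ[k] g i else 0 := by
      intro i _
      rw [hF]
      have : b'.coord j ((1 : k') ⊗ₜ[k] b i) = if i = j then 1 else 0 := by
        rw [Module.Basis.coord_apply, hb', Module.Basis.baseChange_repr_tmul, Module.Basis.repr_self,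
          Finsupp.single_apply]
        split_ifs <;> simp
      rw [this]
      split_ifs <;> simp
    rw [Finset.sum_congr rfl h3, Finset.sum_ite_eq' g.support j
      (fun i => (1 : k') ⊗ₜ[k] g i)] at h2
    by_cases hj : j ∈ g.support
    · rw [if_pos hj] at h2
      exact h2
    · rw [if_neg hj] at h2
      have : g j = 0 := Finsupp.notMem_support_iff.mp hj
      rw [this, tmul_zero]
      exact h2
  by_cases hczero : ∀ j, c j = 0
  · -- all coordinates vanish, so α = 0
    have h1 : (1 : k') ≠ 0 := one_ne_zero
    obtain ⟨ψ, hψ⟩ := (LinearMap.toSpanSingleton k k' 1).exists_leftInverse_of_injective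
      (LinearMap.ker_toSpanSingleton k h1)
    have hψ1 : ψ 1 = 1 := by
      have := LinearMap.congr_fun hψ 1
      simpa using this
    let L : k' ⊗[k] W →ₗ[k] W :=
      (TensorProduct.lid k W).toLinearMap.comp (LinearMap.rTensor W ψ)
    have hL : ∀ (x : k') (w : W), L (x ⊗ₜ[k] w) = ψ x • w := by intro x w; simp [L]
    have hg0 : ∀ j, g j = 0 := by
      intro j
      have := congrArg L (key j)
      rw [hL, hψ1, one_smul, hczero j, zero_smul, map_zero] at this
      exact this
    refine ⟨0, 0, ?_⟩
    rw [hα, tmul_zero]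
    refine Finset.sum_eq_zero fun i _ => by rw [hg0 i, tmul_zero]
  · push_neg at hczero
    obtain ⟨j₀, hj₀⟩ := hczero
    obtain ⟨ψ, hψ⟩ := (LinearMap.toSpanSingleton k k' (c j₀)).exists_leftInverse_of_injective
      (LinearMap.ker_toSpanSingleton k hj₀)
    have hψ1 : ψ (c j₀) = 1 := by
      have := LinearMap.congr_fun hψ 1
      simpa using this
    let L : k' ⊗[k] W →ₗ[k] W :=
      (TensorProduct.lid k W).toLinearMap.comp (LinearMap.rTensor W ψ)
    have hL : ∀ (x : k') (w : W), L (x ⊗ₜ[k] w) = ψ x • w := by intro x w; simp [L]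
    have hgj : ∀ j, g j = ψ (c j) • g j₀ := by
      intro j
      have e1 : (c j₀) • ((1 : k') ⊗ₜ[k] g j) = (c j) • ((1 : k') ⊗ₜ[k] g j₀) := by
        rw [key j, key j₀, smul_comm]
      have e2 : (c j₀) ⊗ₜ[k] g j = (c j) ⊗ₜ[k] g j₀ := by
        rw [TensorProduct.smul_tmul', TensorProduct.smul_tmul', smul_eq_mul, smul_eq_mul,
          mul_one, mul_one] at e1
        exact e1
      have := congrArg L e2
      rw [hL, hL, hψ1, one_smul] at this
      exact this
    refine ⟨∑ i ∈ g.support, ψ (c i) • b i, g j₀, ?_⟩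
    rw [hα, sum_tmul]
    refine Finset.sum_congr rfl fun i _ => ?_
    rw [hgj i, smul_tmul]
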